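/- Along solutions with B(t) > 0, the variable z(t) = (X(t) + s(t) - s*)/B(t) + φ, with φ = (μ(s*)/Y_{B/s} - (α k_d - m_s))/(μ(s*) - k_d), satisfies dz/dt = -γ(μ(s) - μ(s*)) - (μ(s) - k_d)·z, where γ = (k_d(1 - α Y_{B/s}) + Y_{B/s} m_s)/(Y_{B/s}(k_d - μ(s*))) > 0. -/

import Mathlib

/-- The change of variable `z = (X + s - s*)/B + φ` satisfies
`dz/dt = -γ(μ(s) - μ(s*)) - (μ(s) - k_d) z`, with `γ > 0`. -/
theorem stmt_18 (μ : ℝ → ℝ) (KH α kd YB ms sstar : ℝ) (X B S : ℝ → ℝ)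
    (hμ : ContDiff ℝ 1 μ) (hμ0 : μ 0 = 0) (hμpos : ∀ x, 0 < x → 0 < μ x)
    (hkd : 0 < kd) (hKH : 0 < KH) (hα0 : 0 ≤ α) (hα1 : α < 1)
    (hYB : 0 < YB) (hYB1 : YB < 1) (hms : 0 < ms)
    (hsstar : 0 ≤ sstar) (hμs : μ sstar < kd)
    (hBpos : ∀ t, 0 ≤ t → 0 < B t)
    (hODE : ∀ t, 0 ≤ t →
      HasDerivAt X (-KH * X t + α * kd * B t) t ∧
      HasDerivAt B ((μ (S t) - kd) * B t) t ∧
      HasDerivAt S (-(μ (S t) / YB + ms) * B t + KH * X t) t) :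
    0 < (kd * (1 - α * YB) + YB * ms) / (YB * (kd - μ sstar)) ∧
    ∀ t, 0 ≤ t →
      HasDerivAt
        (fun τ => (X τ + S τ - sstar) / B τ
          + (μ sstar / YB - (α * kd - ms)) / (μ sstar - kd))
        (-((kd * (1 - α * YB) + YB * ms) / (YB * (kd - μ sstar)))
            * (μ (S t) - μ sstar)
          - (μ (S t) - kd) *
            ((X t + S t - sstar) / B t
              + (μ sstar / YB - (α * kd - ms)) / (μ sstar - kd))) t := by
  have hden : 0 < kd - μ sstar := by linarith
  constructor
  · apply div_pos
    · have : α * YB < 1 := by nlinarith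
      nlinarith
    · positivity
  · intro t ht
    obtain ⟨hX, hB, hS⟩ := hODE t ht
    have hBne : B t ≠ 0 := (hBpos t ht).ne'
    have hN : HasDerivAt (fun τ => X τ + S τ - sstar)
        ((α * kd - μ (S t) / YB - ms) * B t) t := by
      have := ((hX.add hS).sub_const sstar)
      exact this.congr_deriv (by ring)
    have hz : HasDerivAt
        (fun τ => (X τ + S τ - sstar) / B τ
          + (μ sstar / YB - (α * kd - ms)) / (μ sstar - kd))
        (((α * kd - μ (S t) / YB - ms) * B t * B t
          - (X t + S t - sstar) * ((μ (S t) - kd) * B t)) / (B t) ^ 2) t :=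
      (hN.div hB hBne).add_const _
    convert hz using 1
    have hμne : μ sstar - kd ≠ 0 := by linarith
    field_simp
    ring
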